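/- arXiv:1011.4810 — 8 statements merged into one kernel-verified Lean document; each statement's English description precedes it below -/
import Mathlib

section
/- Let k > 0. The function u(t,x) = (1 + k·exp(−(5/6)t + x/√6))^(−2) satisfies the Fisher equation ∂ₜu(t,x) = ∂ₓₓu(t,x) + u(t,x)(1 − u(t,x)) for all t ∈ ℝ and x ∈ ℝ, and satisfies the initial condition u(0,x) = (1 + k·exp(x/√6))^(−2). -/
private lemma fisher_alg (k A s G : ℝ) (hG : G = 1 + k*A) (hG0 : G ≠ 0) (hs : s*s = 6⁻¹) :
    (5/3)*(k*A)/G^3 = -(2*k*s) * ((A*s*G^3 - A*((3:ℝ)*G^2*(k*(A*s))))/(G^3)^2)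
      + (G^2)⁻¹*(1-(G^2)⁻¹) := by
  subst hG
  field_simp
  linear_combination (6*(k*A - 2*(k*A)^2)) * hs

/-- The travelling-wave function `u(t,x) = (1 + k·exp(−(5/6)t + x/√6))⁻²` (with `k > 0`)
satisfies the Fisher equation `∂ₜu = ∂ₓₓu + u(1−u)` for all `t, x ∈ ℝ`, and the initial
condition `u(0,x) = (1 + k·exp(x/√6))⁻²`. -/
theorem fisher_wave_solution_right (k : ℝ) (hk : 0 < k)
    (u : ℝ → ℝ → ℝ)
    (hu : ∀ t x, u t x = ((1 + k * Real.exp (-(5/6) * t + x / Real.sqrt 6)) ^ 2)⁻¹) :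
    (∀ t x : ℝ,
      deriv (fun s => u s x) t
        = deriv (deriv (fun y => u t y)) x + u t x * (1 - u t x)) ∧
    (∀ x : ℝ, u 0 x = ((1 + k * Real.exp (x / Real.sqrt 6)) ^ 2)⁻¹) := by
  have hc : (0:ℝ) < Real.sqrt 6 := Real.sqrt_pos.mpr (by norm_num)
  have hc0 : Real.sqrt 6 ≠ 0 := ne_of_gt hc
  have hc2 : Real.sqrt 6 * Real.sqrt 6 = 6 := Real.mul_self_sqrt (by norm_num)
  set c := Real.sqrt 6 with hcdef
  have hs : c⁻¹ * c⁻¹ = 6⁻¹ := by rw [← mul_inv, hc2]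
  have hgne : ∀ t x : ℝ, (1 + k * Real.exp (-(5/6) * t + x / c)) ≠ 0 := fun t x => by
    positivity
  constructor
  · intro t x
    simp only [hu]
    set E : ℝ → ℝ := fun y => Real.exp (-(5/6) * t + y / c) with hE
    set g : ℝ → ℝ := fun y => 1 + k * E y with hgdef
    have hgne' : ∀ y, g y ≠ 0 := fun y => hgne t y
    have hEd : ∀ y, HasDerivAt E (E y * c⁻¹) y := by
      intro y
      have h1 : HasDerivAt (fun y : ℝ => -(5/6) * t + y / c) c⁻¹ y := by
        have h := ((hasDerivAt_id y).div_const c).const_add (-(5/6) * t)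
        rwa [one_div] at h
      exact h1.exp
    have hgd : ∀ y, HasDerivAt g (k * (E y * c⁻¹)) y := fun y =>
      ((hEd y).const_mul k).const_add 1
    -- time derivative
    have hT : HasDerivAt (fun s => ((1 + k * Real.exp (-(5/6) * s + x / c)) ^ 2)⁻¹)
        ((5/3) * (k * E x) / g x ^ 3) t := by
      have h1 : HasDerivAt (fun s : ℝ => -(5/6) * s + x / c) (-(5/6)) t := by
        have h := ((hasDerivAt_id t).const_mul (-(5/6) : ℝ)).add_const (x / c)
        rwa [mul_one] at h
      have h2 := (((h1.exp.const_mul k).const_add 1).pow 2).inv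
        (pow_ne_zero 2 (hgne t x))
      have heq : -(((2:ℕ):ℝ) * (1 + k * E x) ^ (2-1) * (k * (E x * (-(5/6))))) /
          ((1 + k * E x) ^ 2) ^ 2 = (5/3) * (k * E x) / g x ^ 3 := by
        have h0 := hgne' x
        rw [hgdef]
        push_cast
        field_simp
        ring
      exact heq ▸ h2
    -- first space derivative
    have hXd : ∀ y, HasDerivAt (fun y => ((1 + k * Real.exp (-(5/6) * t + y / c)) ^ 2)⁻¹)
        (-(2 * k * c⁻¹) * (E y / g y ^ 3)) y := by
      intro y
      have h3 := (((hEd y).const_mul k).const_add 1).pow 2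
      have h4 := h3.inv (pow_ne_zero 2 (hgne' y))
      have heq : -(((2:ℕ):ℝ) * (1 + k * E y) ^ (2-1) * (k * (E y * c⁻¹))) /
          ((1 + k * E y) ^ 2) ^ 2 = -(2 * k * c⁻¹) * (E y / g y ^ 3) := by
        have h0 := hgne' y
        rw [hgdef]
        push_cast
        field_simp
      exact heq ▸ h4
    have hDfun : deriv (fun y => ((1 + k * Real.exp (-(5/6) * t + y / c)) ^ 2)⁻¹)
        = fun y => -(2 * k * c⁻¹) * (E y / g y ^ 3) :=
      funext fun y => (hXd y).deriv
    -- second space derivative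
    have hXX : HasDerivAt (fun y => -(2 * k * c⁻¹) * (E y / g y ^ 3))
        (-(2 * k * c⁻¹) * ((E x * c⁻¹ * g x ^ 3 -
          E x * ((3:ℝ) * g x ^ 2 * (k * (E x * c⁻¹)))) / (g x ^ 3) ^ 2)) x := by
      have hden : HasDerivAt (fun y => g y ^ 3) ((3:ℝ) * g x ^ 2 * (k * (E x * c⁻¹))) x := by
        have h := (hgd x).pow 3
        norm_num at h
        exact h
      exact ((hEd x).div hden (pow_ne_zero 3 (hgne' x))).const_mul _
    rw [hT.deriv, hDfun, hXX.deriv]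
    exact fisher_alg k (E x) c⁻¹ (g x) rfl (hgne' x) hs
  · intro x
    rw [hu]
    norm_num
end

section
/- Let k > 0. The function u(t,x) = (1 + k·exp(−(5/6)t − x/√6))^(−2) satisfies the Fisher equation ∂ₜu(t,x) = ∂ₓₓu(t,x) + u(t,x)(1 − u(t,x)) for all t ∈ ℝ and x ∈ ℝ, and satisfies the initial condition u(0,x) = (1 + k·exp(−x/√6))^(−2). -/
open Real

private lemma phi_hasDeriv (k z : ℝ) (hk : 0 < k) :
    HasDerivAt (fun w => ((1 + k * Real.exp w) ^ 2)⁻¹)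
      (-2 * k * Real.exp z / (1 + k * Real.exp z) ^ 3) z := by
  have h0 : (0:ℝ) < 1 + k * Real.exp z := by positivity
  have h1 : HasDerivAt (fun w => 1 + k * Real.exp w) (k * Real.exp z) z :=
    ((Real.hasDerivAt_exp z).const_mul k).const_add 1
  have h2 : HasDerivAt (fun w => ((1 + k * Real.exp w) ^ 2)⁻¹) _ z := (h1.fun_pow 2).fun_inv (by exact pow_ne_zero 2 h0.ne')
  convert h2 using 1
  field_simp
  ring

private lemma phi'_hasDeriv (k z : ℝ) (hk : 0 < k) :
    HasDerivAt (fun w => -2 * k * Real.exp w / (1 + k * Real.exp w) ^ 3)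
      (-2 * k * Real.exp z / (1 + k * Real.exp z) ^ 3
        + 6 * (k * Real.exp z) ^ 2 / (1 + k * Real.exp z) ^ 4) z := by
  have h0 : (0:ℝ) < 1 + k * Real.exp z := by positivity
  have h1 : HasDerivAt (fun w => 1 + k * Real.exp w) (k * Real.exp z) z :=
    ((Real.hasDerivAt_exp z).const_mul k).const_add 1
  have h3 : HasDerivAt (fun w => -2 * k * Real.exp w) (-2 * k * Real.exp z) z := by
    have := (Real.hasDerivAt_exp z).const_mul (-2 * k)
    convert this using 2 <;> ring
  have h4 := (h1.fun_pow 3).fun_inv (by exact pow_ne_zero 3 h0.ne')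
  have h5 : HasDerivAt (fun w => -2 * k * Real.exp w / (1 + k * Real.exp w) ^ 3) _ z :=
    h3.fun_mul h4
  convert h5 using 1
  push_cast
  field_simp
  ring

/-- The travelling-wave function `u(t,x) = (1 + k·exp(−(5/6)t − x/√6))⁻²` (with `k > 0`)
satisfies the Fisher equation `∂ₜu = ∂ₓₓu + u(1−u)` for all `t, x ∈ ℝ`, and the initial
condition `u(0,x) = (1 + k·exp(−x/√6))⁻²`. -/
theorem fisher_wave_solution_left (k : ℝ) (hk : 0 < k)
    (u : ℝ → ℝ → ℝ)
    (hu : ∀ t x, u t x = ((1 + k * Real.exp (-(5/6) * t - x / Real.sqrt 6)) ^ 2)⁻¹) :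
    (∀ t x : ℝ,
      deriv (fun s => u s x) t
        = deriv (deriv (fun y => u t y)) x + u t x * (1 - u t x)) ∧
    (∀ x : ℝ, u 0 x = ((1 + k * Real.exp (-x / Real.sqrt 6)) ^ 2)⁻¹) := by
  have hs6 : (0:ℝ) < Real.sqrt 6 := Real.sqrt_pos.mpr (by norm_num)
  have hs6sq : Real.sqrt 6 * Real.sqrt 6 = 6 := Real.mul_self_sqrt (by norm_num)
  constructor
  · intro t x
    set g : ℝ → ℝ → ℝ := fun t x => -(5/6) * t - x / Real.sqrt 6 with hg
    -- time derivative
    have hlt : HasDerivAt (fun s => g s x) (-(5/6)) t := by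
      have h := (hasDerivAt_id t).const_mul (-(5/6 : ℝ))
      rw [mul_one] at h
      exact h.sub_const (x / Real.sqrt 6)
    have hT : deriv (fun s => u s x) t
        = -2 * k * Real.exp (g t x) / (1 + k * Real.exp (g t x)) ^ 3 * (-(5/6)) := by
      have := ((phi_hasDeriv k (g t x) hk).comp t hlt).deriv
      rw [← this]
      congr 1
      funext s
      simp [hu, hg, Function.comp]
    -- space derivative (slope of y ↦ g t y)
    have hlx : ∀ y : ℝ, HasDerivAt (fun y => g t y) (-(Real.sqrt 6)⁻¹) y := by
      intro y
      have h1 := (hasDerivAt_id y).div_const (Real.sqrt 6)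
      rw [one_div] at h1
      exact h1.const_sub (-(5/6) * t)
    have hX1 : deriv (fun y => u t y)
        = fun y => -2 * k * Real.exp (g t y) / (1 + k * Real.exp (g t y)) ^ 3
            * (-(Real.sqrt 6)⁻¹) := by
      funext y
      have := ((phi_hasDeriv k (g t y) hk).comp y (hlx y)).deriv
      rw [← this]
      congr 1
      funext z
      simp [hu, hg, Function.comp]
    have hX2 : deriv (deriv (fun y => u t y)) x
        = (-2 * k * Real.exp (g t x) / (1 + k * Real.exp (g t x)) ^ 3
            + 6 * (k * Real.exp (g t x)) ^ 2 / (1 + k * Real.exp (g t x)) ^ 4)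
          * (-(Real.sqrt 6)⁻¹) * (-(Real.sqrt 6)⁻¹) := by
      rw [hX1]
      exact (((phi'_hasDeriv k (g t x) hk).comp x (hlx x)).mul_const
        (-(Real.sqrt 6)⁻¹)).deriv
    rw [hT, hX2, hu]
    have h0 : (0:ℝ) < 1 + k * Real.exp (g t x) := by positivity
    have hg' : -(5/6) * t - x / Real.sqrt 6 = g t x := rfl
    rw [hg']
    have h6 : Real.sqrt 6 ^ 2 = 6 := Real.sq_sqrt (by norm_num)
    field_simp
    ring_nf
    simp only [h6]
    ring
  · intro x
    rw [hu]
    norm_num [neg_div]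
end

section
/- Let X be a real Banach space, A : X → X a bounded linear operator, and R : X → X a twice continuously differentiable map. Let U : ℝ → X be differentiable with U′(t) = A(U(t)) + R(U(t)) for all t, and let t₀ ∈ ℝ, U₀ := U(t₀). For τ > 0 define the sequential-splitting explicit-Euler approximation starting with the nonlinear step: V(τ) := U₀ + τ·R(U₀) and Ũ(τ) := V(τ) + τ·A(V(τ)). Then, as τ → 0, U(t₀ + τ) − Ũ(τ) = (τ²/2)·(A(A(U₀)) − A(R(U₀)) + R′(U₀)(A(U₀)) + R′(U₀)(R(U₀))) + o(τ²); in particular the local error is O(τ²), so the combined method is of (local) order one. -/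
open Asymptotics Filter Topology Set

/-- Sequential splitting (nonlinear step first) combined with the explicit Euler method:
with `V(τ) = U₀ + τR(U₀)` and `Ũ(τ) = V(τ) + τA(V(τ))`, the local error satisfies, as
`τ → 0⁺`,
`U(t₀+τ) − Ũ(τ) = (τ²/2)(A(A(U₀)) − A(R(U₀)) + R′(U₀)(A(U₀)) + R′(U₀)(R(U₀))) + o(τ²)`;
in particular the local error is `O(τ²)`, so the combined method is of (local) order one. -/
theorem seq_splitting_euler_nonlinear_first
    {X : Type*} [NormedAddCommGroup X] [NormedSpace ℝ X] [CompleteSpace X]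
    (A : X →L[ℝ] X) (R : X → X) (hR : ContDiff ℝ 2 R)
    (U : ℝ → X) (hU : ∀ t : ℝ, HasDerivAt U (A (U t) + R (U t)) t)
    (t₀ : ℝ) (U₀ : X) (hU₀ : U₀ = U t₀)
    (V Utilde : ℝ → X)
    (hV : ∀ τ : ℝ, 0 < τ → V τ = U₀ + τ • R U₀)
    (hUt : ∀ τ : ℝ, 0 < τ → Utilde τ = V τ + τ • A (V τ)) :
    ((fun τ : ℝ =>
        U (t₀ + τ) - Utilde τ -
          (τ ^ 2 / 2) •
            (A (A U₀) - A (R U₀) + fderiv ℝ R U₀ (A U₀) + fderiv ℝ R U₀ (R U₀)))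
      =o[𝓝[>] 0] fun τ : ℝ => τ ^ 2) ∧
    ((fun τ : ℝ => U (t₀ + τ) - Utilde τ) =O[𝓝[>] 0] fun τ : ℝ => τ ^ 2) := by
  have hRd : Differentiable ℝ R := hR.differentiable two_ne_zero
  set f : ℝ → X := fun t => A (U t) + R (U t) with hf
  set g : X := A (A U₀ + R U₀) + fderiv ℝ R U₀ (A U₀ + R U₀) with hg
  have hft : f t₀ = A U₀ + R U₀ := by simp [hf, hU₀]
  -- the derivative of `f` at `t₀`
  have hfd : HasDerivAt f g t₀ := by
    have h1 : HasDerivAt (fun t => A (U t)) (A (A U₀ + R U₀)) t₀ := by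
      simpa [hU₀, Function.comp_def] using A.hasFDerivAt.comp_hasDerivAt t₀ (hU t₀)
    have h2 : HasDerivAt (fun t => R (U t)) (fderiv ℝ R U₀ (A U₀ + R U₀)) t₀ := by
      simpa [hU₀, Function.comp_def] using (hRd (U t₀)).hasFDerivAt.comp_hasDerivAt t₀ (hU t₀)
    exact h1.add h2
  -- the derivative of `τ ↦ U (t₀ + τ)`
  have hU' : ∀ x : ℝ, HasDerivAt (fun s => U (t₀ + s)) (f (t₀ + x)) x := by
    intro x
    have := (hU (t₀ + x)).scomp x ((hasDerivAt_id x).const_add t₀)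
    simpa [hf, Function.comp_def] using this
  -- second-order Taylor remainder estimate
  have key : (fun τ : ℝ => U (t₀ + τ) - U₀ - τ • (A U₀ + R U₀) - (τ ^ 2 / 2) • g)
      =o[𝓝[>] (0 : ℝ)] fun τ : ℝ => τ ^ 2 := by
    rw [isLittleO_iff]
    intro ε hε
    have hlo : (fun t => f t - f t₀ - (t - t₀) • g) =o[𝓝 t₀] fun t => t - t₀ :=
      hasDerivAt_iff_isLittleO.mp hfd
    have hev := (isLittleO_iff.mp hlo) hε
    rcases Metric.eventually_nhds_iff.mp hev with ⟨δ, hδ, hδ'⟩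
    filter_upwards [Ioo_mem_nhdsGT_of_mem (show (0 : ℝ) ∈ Ico (0:ℝ) δ from ⟨le_refl _, hδ⟩)]
      with τ hτ
    obtain ⟨hτ0, hτδ⟩ := hτ
    set h : ℝ → X := fun x => U (t₀ + x) - x • (A U₀ + R U₀) - (x ^ 2 / 2) • g with hh
    have hder : ∀ x : ℝ, HasDerivAt h (f (t₀ + x) - f t₀ - x • g) x := by
      intro x
      have h2 : HasDerivAt (fun s : ℝ => s • (A U₀ + R U₀)) (A U₀ + R U₀) x := by
        simpa using (hasDerivAt_id x).smul_const (A U₀ + R U₀)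
      have h3 : HasDerivAt (fun s : ℝ => (s ^ 2 / 2) • g) (x • g) x := by
        have hq : HasDerivAt (fun s : ℝ => s ^ 2 / 2) x x := by
          have := (hasDerivAt_pow 2 x).div_const 2
          norm_num at this
          simpa using this
        simpa using hq.smul_const g
      have h4 := ((hU' x).sub h2).sub h3
      rw [hft]
      exact h4
    have bound : ∀ x ∈ Ico (0:ℝ) τ, ‖f (t₀ + x) - f t₀ - x • g‖ ≤ ε * τ := by
      intro x hx
      have hxd : dist (t₀ + x) t₀ < δ := by
        rw [Real.dist_eq]
        simp only [add_sub_cancel_left]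
        rw [abs_of_nonneg hx.1]
        exact lt_trans hx.2 hτδ
      have := hδ' hxd
      simp only [add_sub_cancel_left] at this
      calc ‖f (t₀ + x) - f t₀ - x • g‖ ≤ ε * ‖x‖ := this
        _ ≤ ε * τ := by
            apply mul_le_mul_of_nonneg_left _ hε.le
            rw [Real.norm_eq_abs, abs_of_nonneg hx.1]; exact hx.2.le
    have mvt := norm_image_sub_le_of_norm_deriv_le_segment'
      (f' := fun x => f (t₀ + x) - f t₀ - x • g) (C := ε * τ)
      (fun x _ => (hder x).hasDerivWithinAt) bound τ (right_mem_Icc.mpr hτ0.le)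
    have hh0 : h 0 = U t₀ := by simp [hh]
    have : ‖U (t₀ + τ) - U₀ - τ • (A U₀ + R U₀) - (τ ^ 2 / 2) • g‖ ≤ ε * τ * τ := by
      have : h τ - h 0 = U (t₀ + τ) - U₀ - τ • (A U₀ + R U₀) - (τ ^ 2 / 2) • g := by
        rw [hh0, ← hU₀]
        simp only [hh]
        abel
      rw [← this]
      simpa using mvt
    calc ‖U (t₀ + τ) - U₀ - τ • (A U₀ + R U₀) - (τ ^ 2 / 2) • g‖ ≤ ε * τ * τ := this
      _ = ε * ‖τ ^ 2‖ := by
          rw [Real.norm_eq_abs, abs_of_nonneg (by positivity), sq]; ring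
  -- rewrite the error in terms of the Taylor remainder
  have heq : (fun τ : ℝ =>
        U (t₀ + τ) - Utilde τ -
          (τ ^ 2 / 2) •
            (A (A U₀) - A (R U₀) + fderiv ℝ R U₀ (A U₀) + fderiv ℝ R U₀ (R U₀)))
      =ᶠ[𝓝[>] (0 : ℝ)]
      (fun τ : ℝ => U (t₀ + τ) - U₀ - τ • (A U₀ + R U₀) - (τ ^ 2 / 2) • g) := by
    filter_upwards [self_mem_nhdsWithin] with τ hτ
    rw [hUt τ hτ, hV τ hτ, hg]
    simp only [map_add, map_smul, smul_add, smul_sub]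
    module
  have first := heq.trans_isLittleO key
  refine ⟨first, ?_⟩
  have hO : (fun τ : ℝ => (τ ^ 2 / 2) •
      (A (A U₀) - A (R U₀) + fderiv ℝ R U₀ (A U₀) + fderiv ℝ R U₀ (R U₀)))
      =O[𝓝[>] (0 : ℝ)] fun τ : ℝ => τ ^ 2 := by
    set c := A (A U₀) - A (R U₀) + fderiv ℝ R U₀ (A U₀) + fderiv ℝ R U₀ (R U₀) with hc
    rw [isBigO_iff]
    refine ⟨‖c‖, Eventually.of_forall fun τ => ?_⟩
    rw [norm_smul, Real.norm_eq_abs (τ ^ 2 / 2), Real.norm_eq_abs (τ ^ 2),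
      abs_div, abs_of_nonneg (sq_nonneg τ), abs_two, mul_comm ‖c‖ (τ ^ 2)]
    apply mul_le_mul_of_nonneg_right _ (norm_nonneg c)
    linarith [sq_nonneg τ]
  have := first.isBigO.add hO
  refine this.congr' (Eventually.of_forall fun τ => ?_) (Eventually.of_forall fun τ => rfl)
  abel
end

section
/- Let X be a real Banach space, A : X → X a bounded linear operator, and R : X → X a twice continuously differentiable map. Let U : ℝ → X be differentiable with U′(t) = A(U(t)) + R(U(t)) for all t, and let t₀ ∈ ℝ, U₀ := U(t₀). Fix ω ∈ [0,1] and for τ > 0 define the weighted-splitting explicit-Euler approximation Ũ(τ) := ω·Ũ_RN(τ) + (1−ω)·Ũ_NR(τ), where Ũ_RN(τ) := (U₀ + τR(U₀)) + τA(U₀ + τR(U₀)) (reaction step first) and Ũ_NR(τ) := (U₀ + τA(U₀)) + τR(U₀ + τA(U₀)) (linear step first). Then, as τ → 0, U(t₀ + τ) − Ũ(τ) = (τ²/2)·(A(A(U₀)) + (1−2ω)·A(R(U₀)) + (2ω−1)·R′(U₀)(A(U₀)) + R′(U₀)(R(U₀))) + o(τ²). -/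
open Asymptotics Filter Topology

/-- Weighted sequential splitting with weight `ω ∈ [0,1]` combined with the explicit Euler
method: with `Ũ_RN(τ) = (U₀+τR(U₀)) + τA(U₀+τR(U₀))` (reaction first),
`Ũ_NR(τ) = (U₀+τA(U₀)) + τR(U₀+τA(U₀))` (linear first), and
`Ũ(τ) = ω·Ũ_RN(τ) + (1−ω)·Ũ_NR(τ)`, the local error satisfies, as `τ → 0⁺`,
`U(t₀+τ) − Ũ(τ) = (τ²/2)(A(A(U₀)) + (1−2ω)A(R(U₀)) + (2ω−1)R′(U₀)(A(U₀)) + R′(U₀)(R(U₀))) + o(τ²)`. -/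
theorem weighted_splitting_euler
    {X : Type*} [NormedAddCommGroup X] [NormedSpace ℝ X] [CompleteSpace X]
    (A : X →L[ℝ] X) (R : X → X) (hR : ContDiff ℝ 2 R)
    (U : ℝ → X) (hU : ∀ t : ℝ, HasDerivAt U (A (U t) + R (U t)) t)
    (t₀ : ℝ) (U₀ : X) (hU₀ : U₀ = U t₀)
    (ω : ℝ) (hω0 : 0 ≤ ω) (hω1 : ω ≤ 1)
    (UtildeRN UtildeNR Utilde : ℝ → X)
    (hRN : ∀ τ : ℝ, 0 < τ →
      UtildeRN τ = (U₀ + τ • R U₀) + τ • A (U₀ + τ • R U₀))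
    (hNR : ∀ τ : ℝ, 0 < τ →
      UtildeNR τ = (U₀ + τ • A U₀) + τ • R (U₀ + τ • A U₀))
    (hUt : ∀ τ : ℝ, 0 < τ → Utilde τ = ω • UtildeRN τ + (1 - ω) • UtildeNR τ) :
    (fun τ : ℝ =>
        U (t₀ + τ) - Utilde τ -
          (τ ^ 2 / 2) •
            (A (A U₀) + (1 - 2 * ω) • A (R U₀) + (2 * ω - 1) • fderiv ℝ R U₀ (A U₀) +
              fderiv ℝ R U₀ (R U₀)))
      =o[𝓝[>] 0] fun τ : ℝ => τ ^ 2 := by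
  have hRd : Differentiable ℝ R := hR.differentiable two_ne_zero
  set R' : X →L[ℝ] X := fderiv ℝ R U₀ with hR'def
  have hRU : HasFDerivAt R R' U₀ := (hRd U₀).hasFDerivAt
  set V : X := A U₀ + R U₀ with hVdef
  set W : X := A V + R' V with hWdef
  set u : ℝ → X := fun τ => U (t₀ + τ) with hudef
  have hu0 : u 0 = U₀ := by simp [hudef, hU₀]
  have hu : ∀ τ : ℝ, HasDerivAt u (A (u τ) + R (u τ)) τ := by
    intro τ
    have h1 : HasDerivAt (fun s : ℝ => t₀ + s) 1 τ := (hasDerivAt_id τ).const_add t₀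
    have := HasDerivAt.scomp τ (hU (t₀ + τ)) h1
    simpa [hudef, Function.comp_def] using this
  have hV0 : HasDerivAt u V 0 := by
    have := hu 0
    rwa [hu0, ← hVdef] at this
  -- derivative at 0 of the vector field along u
  have hA0 : HasDerivAt (fun τ => A (u τ)) (A V) 0 :=
    A.hasFDerivAt.comp_hasDerivAt 0 hV0
  have hR0 : HasDerivAt (fun τ => R (u τ)) (R' V) 0 := by
    have h := hRU
    rw [← hu0] at h
    exact h.comp_hasDerivAt 0 hV0
  set g : ℝ → X := fun τ => u τ - U₀ - τ • V - (τ ^ 2 / 2) • W with hgdef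
  have hgd : ∀ τ : ℝ, HasDerivAt g (A (u τ) + R (u τ) - V - τ • W) τ := by
    intro τ
    have h2 : HasDerivAt (fun τ : ℝ => (τ ^ 2 / 2) • W) (τ • W) τ := by
      have h := ((hasDerivAt_pow 2 τ).div_const 2).smul_const W
      have he : ((2:ℕ) * τ ^ (2-1) / 2 : ℝ) = τ := by norm_num
      rwa [he] at h
    have h3 : HasDerivAt (fun τ : ℝ => τ • V) V τ := by
      simpa using (hasDerivAt_id τ).smul_const V
    exact (((hu τ).sub_const U₀).sub h3).sub h2
  have hg'' : HasDerivAt (fun τ : ℝ => A (u τ) + R (u τ) - V - τ • W) (0 : X) 0 := by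
    have h3 : HasDerivAt (fun τ : ℝ => A (u τ) + R (u τ)) W 0 := by
      have := hA0.add hR0
      rwa [← hWdef] at this
    have h4 : HasDerivAt (fun τ : ℝ => τ • W) W 0 := by
      simpa using (hasDerivAt_id (0 : ℝ)).smul_const W
    have := (h3.sub_const V).sub h4
    rw [sub_self] at this
    exact this
  have hg'o : (fun τ : ℝ => A (u τ) + R (u τ) - V - τ • W) =o[𝓝 0] fun τ : ℝ => τ := by
    have := hasDerivAt_iff_isLittleO.mp hg''
    have h0 : A (u 0) + R (u 0) - V = 0 := by rw [hu0, hVdef]; abel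
    simpa [h0] using this
  have hg0 : g 0 = 0 := by simp [hgdef, hu0]
  have hgo : g =o[𝓝[>] 0] fun τ : ℝ => τ ^ 2 := by
    rw [isLittleO_iff]
    intro c hc
    obtain ⟨δ, hδ, hδ'⟩ := Metric.eventually_nhds_iff.mp (hg'o.def hc)
    filter_upwards [Ioo_mem_nhdsGT_of_mem (by constructor <;> simp [hδ] : (0:ℝ) ∈ Set.Ico 0 δ)]
      with τ hτ
    have key : ‖g τ - g 0‖ ≤ (c * τ) * ‖τ - 0‖ := by
      apply Convex.norm_image_sub_le_of_norm_hasDerivWithin_le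
        (f' := fun s => A (u s) + R (u s) - V - s • W)
        (fun s hs => (hgd s).hasDerivWithinAt)
        (fun s hs => ?_) (convex_Icc 0 τ) (Set.left_mem_Icc.mpr hτ.1.le)
        (Set.right_mem_Icc.mpr hτ.1.le)
      · have hs0 : 0 ≤ s := hs.1
        have hsτ : s ≤ τ := hs.2
        have hsd : dist s 0 < δ := by
          rw [Real.dist_eq, sub_zero, abs_of_nonneg hs0]
          exact lt_of_le_of_lt hsτ hτ.2
        calc ‖A (u s) + R (u s) - V - s • W‖ ≤ c * ‖s‖ := hδ' hsd
          _ ≤ c * τ := by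
              rw [Real.norm_eq_abs, abs_of_nonneg hs0]
              exact mul_le_mul_of_nonneg_left hsτ hc.le
    rw [hg0, sub_zero, sub_zero, Real.norm_eq_abs, abs_of_nonneg hτ.1.le] at key
    calc ‖g τ‖ ≤ c * τ * τ := key
      _ = c * ‖τ ^ 2‖ := by
          rw [Real.norm_eq_abs, abs_of_nonneg (by positivity : (0:ℝ) ≤ τ ^ 2)]
          ring
  -- expansion of R along the linear Euler step
  have hEd : HasDerivAt (fun τ : ℝ => R (U₀ + τ • A U₀)) (R' (A U₀)) 0 := by
    have hin : HasDerivAt (fun τ : ℝ => U₀ + τ • A U₀) (A U₀) 0 := by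
      simpa using ((hasDerivAt_id (0 : ℝ)).smul_const (A U₀)).const_add U₀
    have h := hRU
    have he : U₀ = U₀ + (0 : ℝ) • A U₀ := by simp
    rw [he] at h
    exact h.comp_hasDerivAt 0 hin
  have hEo : (fun τ : ℝ => R (U₀ + τ • A U₀) - R U₀ - τ • R' (A U₀)) =o[𝓝 0]
      fun τ : ℝ => τ := by
    have := hasDerivAt_iff_isLittleO.mp hEd
    simpa using this
  have hτE : (fun τ : ℝ => (1 - ω) • (τ • (R (U₀ + τ • A U₀) - R U₀ - τ • R' (A U₀))))
      =o[𝓝[>] 0] fun τ : ℝ => τ ^ 2 := by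
    have h1 := (isBigO_refl (fun τ : ℝ => τ) (𝓝[>] 0)).smul_isLittleO
      (hEo.mono nhdsWithin_le_nhds)
    have h2 : (fun τ : ℝ => τ • τ) = fun τ : ℝ => τ ^ 2 := by
      funext τ; simp [smul_eq_mul, sq]
    rw [h2] at h1
    exact h1.const_smul_left (1 - ω)
  have heq : (fun τ : ℝ =>
        U (t₀ + τ) - Utilde τ -
          (τ ^ 2 / 2) •
            (A (A U₀) + (1 - 2 * ω) • A (R U₀) + (2 * ω - 1) • R' (A U₀) + R' (R U₀)))
      =ᶠ[𝓝[>] 0]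
      fun τ : ℝ => g τ - (1 - ω) • (τ • (R (U₀ + τ • A U₀) - R U₀ - τ • R' (A U₀))) := by
    filter_upwards [self_mem_nhdsWithin] with τ hτ
    have hτ' : (0 : ℝ) < τ := hτ
    rw [hUt τ hτ', hRN τ hτ', hNR τ hτ', hgdef, hudef, hWdef, hVdef]
    simp only [map_add, map_smul, ContinuousLinearMap.map_add, ContinuousLinearMap.map_smul]
    module
  exact ((hgo.sub hτE).congr' heq.symm EventuallyEq.rfl)
end

section
/- Let X be a real Banach space, A : X → X a bounded linear operator, and R : X → X a twice continuously differentiable map. Let U : ℝ → X be differentiable with U′(t) = A(U(t)) + R(U(t)) for all t, and let t₀ ∈ ℝ, U₀ := U(t₀). For τ > 0 define the symmetrically weighted splitting explicit-Euler approximation Ũ(τ) := ½·[(U₀ + τR(U₀)) + τA(U₀ + τR(U₀))] + ½·[(U₀ + τA(U₀)) + τR(U₀ + τA(U₀))]. Then, as τ → 0, U(t₀ + τ) − Ũ(τ) = (τ²/2)·(A(A(U₀)) + R′(U₀)(R(U₀))) + o(τ²); in particular the local error is O(τ²), so although symmetrically weighted splitting alone is of second order, its combination with the first-order Euler method is only a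 first-order method. -/
open Asymptotics Filter Topology

open Set in
lemma taylor2 {X : Type*} [NormedAddCommGroup X] [NormedSpace ℝ X]
    (f f' : ℝ → X) (t₀ : ℝ) (f'' : X)
    (hf : ∀ t, HasDerivAt f (f' t) t) (hf' : HasDerivAt f' f'' t₀) :
    (fun h : ℝ => f (t₀ + h) - f t₀ - h • f' t₀ - (h ^ 2 / 2) • f'')
      =o[𝓝[>] (0:ℝ)] fun h => h ^ 2 := by
  rw [isLittleO_iff]
  intro ε hε
  have h1 : (fun t => f' t - f' t₀ - (t - t₀) • f'') =o[𝓝 t₀] fun t => t - t₀ :=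
    hasDerivAt_iff_isLittleO.mp hf'
  rw [isLittleO_iff] at h1
  obtain ⟨δ, hδ, hδ'⟩ := Metric.eventually_nhds_iff.mp (h1 hε)
  filter_upwards [Ioo_mem_nhdsGT_of_mem (Set.left_mem_Ico.mpr hδ)] with h hh
  set g : ℝ → X := fun s => f (t₀ + s) - s • f' t₀ - (s ^ 2 / 2) • f''
  have hg : ∀ s : ℝ, HasDerivAt g (f' (t₀ + s) - f' t₀ - s • f'') s := by
    intro s
    have h1 : HasDerivAt (fun s : ℝ => f (t₀ + s)) (f' (t₀ + s)) s :=
      (hf (t₀ + s)).comp_const_add t₀ s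
    have h2 : HasDerivAt (fun s : ℝ => s • f' t₀) ((1:ℝ) • f' t₀) s :=
      (hasDerivAt_id s).smul_const (f' t₀)
    have h3 : HasDerivAt (fun s : ℝ => (s ^ 2 / 2) • f'') (((2 * s ^ 1)/2) • f'') s :=
      (((hasDerivAt_pow 2 s)).div_const 2).smul_const f''
    have := (h1.sub h2).sub h3
    exact this.congr_deriv (by module)
  have key : ∀ x ∈ Icc (0:ℝ) h, ‖g x - g 0‖ ≤ ε * h * (x - 0) := by
    apply norm_image_sub_le_of_norm_deriv_le_segment'
      (fun x _ => (hg x).hasDerivWithinAt)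
    intro x hx
    have hxδ : dist (t₀ + x) t₀ < δ := by
      simp only [dist_eq_norm, add_sub_cancel_left, Real.norm_eq_abs]
      rw [abs_of_nonneg hx.1]; exact lt_of_lt_of_le hx.2 hh.2.le
    have := hδ' hxδ
    simp only [add_sub_cancel_left, Real.norm_eq_abs] at this
    calc ‖f' (t₀ + x) - f' t₀ - x • f''‖ ≤ ε * |x| := this
      _ ≤ ε * h := by
          apply mul_le_mul_of_nonneg_left _ hε.le
          rw [abs_of_nonneg hx.1]; exact hx.2.le
  have := key h (right_mem_Icc.mpr (le_of_lt hh.1))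
  simp only [g] at this
  calc ‖f (t₀ + h) - f t₀ - h • f' t₀ - (h ^ 2 / 2) • f''‖
      = ‖(f (t₀ + h) - h • f' t₀ - (h ^ 2 / 2) • f'') -
          (f (t₀ + 0) - (0:ℝ) • f' t₀ - ((0:ℝ) ^ 2 / 2) • f'')‖ := by
        norm_num; abel_nf
    _ ≤ ε * h * (h - 0) := this
    _ = ε * ‖h ^ 2‖ := by
        rw [Real.norm_eq_abs, abs_of_nonneg (by positivity), sub_zero]; ring


/-- Symmetrically weighted splitting combined with the explicit Euler method: with
`Ũ(τ) = ½[(U₀+τR(U₀)) + τA(U₀+τR(U₀))] + ½[(U₀+τA(U₀)) + τR(U₀+τA(U₀))]`,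
the local error satisfies, as `τ → 0⁺`,
`U(t₀+τ) − Ũ(τ) = (τ²/2)(A(A(U₀)) + R′(U₀)(R(U₀))) + o(τ²)`;
in particular the local error is `O(τ²)`: although symmetrically weighted splitting alone
is of second order, its combination with the first-order Euler method is only a
first-order method. -/
theorem symmetrically_weighted_splitting_euler
    {X : Type*} [NormedAddCommGroup X] [NormedSpace ℝ X] [CompleteSpace X]
    (A : X →L[ℝ] X) (R : X → X) (hR : ContDiff ℝ 2 R)
    (U : ℝ → X) (hU : ∀ t : ℝ, HasDerivAt U (A (U t) + R (U t)) t)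
    (t₀ : ℝ) (U₀ : X) (hU₀ : U₀ = U t₀)
    (Utilde : ℝ → X)
    (hUt : ∀ τ : ℝ, 0 < τ →
      Utilde τ =
        (1 / 2 : ℝ) • ((U₀ + τ • R U₀) + τ • A (U₀ + τ • R U₀)) +
          (1 / 2 : ℝ) • ((U₀ + τ • A U₀) + τ • R (U₀ + τ • A U₀))) :
    ((fun τ : ℝ =>
        U (t₀ + τ) - Utilde τ -
          (τ ^ 2 / 2) • (A (A U₀) + fderiv ℝ R U₀ (R U₀)))
      =o[𝓝[>] 0] fun τ : ℝ => τ ^ 2) ∧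
    ((fun τ : ℝ => U (t₀ + τ) - Utilde τ) =O[𝓝[>] 0] fun τ : ℝ => τ ^ 2) := by
  have hR1 : Differentiable ℝ R := hR.differentiable (by norm_num)
  set D : X →L[ℝ] X := fderiv ℝ R U₀ with hD
  set v : X := A U₀ + R U₀ with hv
  set w : X := A v + D v with hw
  -- derivative of the derivative at t₀
  have hf'd : HasDerivAt (fun t => A (U t) + R (U t)) w t₀ := by
    have hA : HasDerivAt (fun t => A (U t)) (A (A U₀ + R U₀)) t₀ := by
      have := A.hasFDerivAt.comp_hasDerivAt t₀ (hU t₀)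
      rw [← hU₀] at this; exact this
    have hRc : HasDerivAt (fun t => R (U t)) (D (A U₀ + R U₀)) t₀ := by
      have := (hR1 (U t₀)).hasFDerivAt.comp_hasDerivAt t₀ (hU t₀)
      rw [← hU₀] at this
      exact this
    exact hA.add hRc
  have T1 : (fun h : ℝ => U (t₀ + h) - U t₀ - h • (A (U t₀) + R (U t₀)) - (h ^ 2 / 2) • w)
      =o[𝓝[>] (0:ℝ)] fun h => h ^ 2 :=
    taylor2 U (fun t => A (U t) + R (U t)) t₀ w hU hf'd
  rw [← hU₀] at T1
  -- expansion of R along the path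
  have hpath : HasDerivAt (fun τ : ℝ => R (U₀ + τ • A U₀)) (D (A U₀)) 0 := by
    have h1 : HasDerivAt (fun τ : ℝ => U₀ + τ • A U₀) (A U₀) 0 := by
      simpa using (((hasDerivAt_id (0:ℝ)).smul_const (A U₀)).const_add U₀)
    have := (hR1 (U₀ + (0:ℝ) • A U₀)).hasFDerivAt.comp_hasDerivAt 0 h1
    simpa [Function.comp_def, ← hD] using this
  have hr : (fun τ : ℝ => R (U₀ + τ • A U₀) - R U₀ - τ • D (A U₀)) =o[𝓝 (0:ℝ)] fun τ => τ := by
    have := hasDerivAt_iff_isLittleO.mp hpath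
    simpa using this
  have S : (fun τ : ℝ => (τ / 2) • (R (U₀ + τ • A U₀) - R U₀ - τ • D (A U₀)))
      =o[𝓝[>] (0:ℝ)] fun τ => τ ^ 2 := by
    have hb : (fun τ : ℝ => τ / 2) =O[𝓝[>] (0:ℝ)] fun τ => τ := by
      apply isBigO_of_le
      intro x; simp [Real.norm_eq_abs, abs_div]
    have := hb.smul_isLittleO (hr.mono nhdsWithin_le_nhds)
    refine this.congr' EventuallyEq.rfl ?_
    filter_upwards with τ
    simp [smul_eq_mul]; ring
  -- eventual equality
  have heq : (fun τ : ℝ =>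
        U (t₀ + τ) - Utilde τ - (τ ^ 2 / 2) • (A (A U₀) + D (R U₀)))
      =ᶠ[𝓝[>] (0:ℝ)] fun τ =>
        (U (t₀ + τ) - U₀ - τ • (A U₀ + R U₀) - (τ ^ 2 / 2) • w) -
          (τ / 2) • (R (U₀ + τ • A U₀) - R U₀ - τ • D (A U₀)) := by
    filter_upwards [self_mem_nhdsWithin] with τ (hτ : 0 < τ)
    rw [hUt τ hτ]
    simp only [hw, hv, map_add, map_smul, ContinuousLinearMap.map_smul]
    module
  have main : (fun τ : ℝ =>
        U (t₀ + τ) - Utilde τ - (τ ^ 2 / 2) • (A (A U₀) + D (R U₀)))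
      =o[𝓝[>] (0:ℝ)] fun τ => τ ^ 2 := by
    refine (T1.sub S).congr' heq.symm EventuallyEq.rfl
  refine ⟨main, ?_⟩
  have hc : (fun τ : ℝ => (τ ^ 2 / 2) • (A (A U₀) + D (R U₀)))
      =O[𝓝[>] (0:ℝ)] fun τ => τ ^ 2 := by
    rw [isBigO_iff]
    refine ⟨‖A (A U₀) + D (R U₀)‖, ?_⟩
    filter_upwards with τ
    rw [norm_smul, Real.norm_eq_abs, abs_div, abs_two, mul_comm, Real.norm_eq_abs]
    have h2 : |τ ^ 2| / 2 ≤ |τ ^ 2| := by linarith [abs_nonneg (τ ^ 2)]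
    exact mul_le_mul_of_nonneg_left h2 (norm_nonneg _)
  have := main.isBigO.add hc
  refine this.congr (fun τ => by abel) (fun τ => rfl)
end

section
/- Let X be a real Banach space, A : X → X a bounded linear operator, and R : X → X a three times continuously differentiable map. Let U : ℝ → X be differentiable with U′(t) = A(U(t)) + R(U(t)) for all t, and let t₀ ∈ ℝ, U₀ := U(t₀). For τ > 0 define the sequential-splitting improved-Euler approximation starting with the linear step: V(τ) := U₀ + τ·A(U₀ + (τ/2)·A(U₀)) and Ũ(τ) := V(τ) + τ·R(V(τ) + (τ/2)·R(V(τ))). Then, as τ → 0, U(t₀ + τ) − Ũ(τ) = (τ²/2)·(A(R(U₀)) − R′(U₀)(A(U₀))) + o(τ²); in particular, although the improved Euler scheme is of second order, sequential splitting combined with it yields only a first-order method. -/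
open Asymptotics Filter Topology

lemma little_o_sq_of_deriv {X : Type*} [NormedAddCommGroup X] [NormedSpace ℝ X]
    {g g' : ℝ → X} (hg : ∀ h, HasDerivAt g (g' h) h) (hg0 : g 0 = 0)
    (h' : g' =o[𝓝 0] fun h => h) : g =o[𝓝[>] (0:ℝ)] fun h => h ^ 2 := by
  rw [isLittleO_iff]
  intro ε hε
  rw [isLittleO_iff] at h'
  obtain ⟨δ, hδ, hb⟩ := Metric.eventually_nhds_iff.mp (h' hε)
  filter_upwards [Ioo_mem_nhdsGT_of_mem (Set.left_mem_Ico.mpr hδ)] with h hh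
  have key : ‖g h - g 0‖ ≤ (ε * h) * ‖h - 0‖ := by
    apply (convex_Icc (0:ℝ) h).norm_image_sub_le_of_norm_hasDerivWithin_le
      (f' := g') (fun x _ => (hg x).hasDerivWithinAt) ?_ ⟨le_rfl, hh.1.le⟩ ⟨hh.1.le, le_rfl⟩
    intro x hx
    have hxb : ‖g' x‖ ≤ ε * ‖x‖ := by
      apply hb
      rw [Real.dist_eq, sub_zero, abs_of_nonneg hx.1]
      exact lt_of_le_of_lt hx.2 hh.2
    calc ‖g' x‖ ≤ ε * ‖x‖ := hxb
      _ ≤ ε * h := by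
          rw [Real.norm_eq_abs, abs_of_nonneg hx.1]
          exact mul_le_mul_of_nonneg_left hx.2 hε.le
  rw [hg0, sub_zero, sub_zero, Real.norm_eq_abs, abs_of_nonneg hh.1.le] at key
  calc ‖g h‖ ≤ ε * h * h := key
    _ = ε * ‖h ^ 2‖ := by
        rw [Real.norm_eq_abs, abs_of_nonneg (sq_nonneg h)]; ring

/-- Sequential splitting (linear step first) combined with the second-order improved Euler
(explicit midpoint) scheme: with `V(τ) = U₀ + τA(U₀ + (τ/2)A(U₀))` and
`Ũ(τ) = V(τ) + τR(V(τ) + (τ/2)R(V(τ)))`, the local error satisfies, as `τ → 0⁺`,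
`U(t₀+τ) − Ũ(τ) = (τ²/2)(A(R(U₀)) − R′(U₀)(A(U₀))) + o(τ²)`; in particular, although the
improved Euler scheme is of second order, sequential splitting combined with it yields
only a first-order method. -/
theorem seq_splitting_improved_euler_linear_first
    {X : Type*} [NormedAddCommGroup X] [NormedSpace ℝ X] [CompleteSpace X]
    (A : X →L[ℝ] X) (R : X → X) (hR : ContDiff ℝ 3 R)
    (U : ℝ → X) (hU : ∀ t : ℝ, HasDerivAt U (A (U t) + R (U t)) t)
    (t₀ : ℝ) (U₀ : X) (hU₀ : U₀ = U t₀)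
    (V Utilde : ℝ → X)
    (hV : ∀ τ : ℝ, 0 < τ → V τ = U₀ + τ • A (U₀ + (τ / 2) • A U₀))
    (hUt : ∀ τ : ℝ, 0 < τ →
      Utilde τ = V τ + τ • R (V τ + (τ / 2) • R (V τ))) :
    (fun τ : ℝ =>
        U (t₀ + τ) - Utilde τ -
          (τ ^ 2 / 2) • (A (R U₀) - fderiv ℝ R U₀ (A U₀)))
      =o[𝓝[>] 0] fun τ : ℝ => τ ^ 2 := by
  set L := fderiv ℝ R U₀ with hLdef
  have hRd : DifferentiableAt ℝ R U₀ := (hR.differentiable (by norm_num)).differentiableAt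
  have hRder : HasFDerivAt R L U₀ := hRd.hasFDerivAt
  have hRc : Continuous R := hR.continuous
  set D1 : X := A U₀ + R U₀ with hD1
  set D2 : X := A D1 + L D1 with hD2
  -- Step A: Taylor expansion of the exact solution.
  have hF : HasFDerivAt (fun x => A x + R x) (A + L) (U t₀) := by
    rw [← hU₀]; exact A.hasFDerivAt.add hRder
  have hFU : HasDerivAt (fun t => A (U t) + R (U t)) D2 t₀ := by
    have := hF.comp_hasDerivAt t₀ (hU t₀)
    simp only [Function.comp_def] at this
    convert this using 1
    rw [ContinuousLinearMap.add_apply, hD2, hD1, hU₀]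
  have hGo : (fun h : ℝ => (A (U (t₀ + h)) + R (U (t₀ + h))) - D1 - h • D2) =o[𝓝 0]
      (fun h : ℝ => h) := by
    rw [hasDerivAt_iff_isLittleO] at hFU
    have htend : Tendsto (fun h : ℝ => t₀ + h) (𝓝 0) (𝓝 t₀) := by
      simpa using (continuous_add_left t₀).tendsto (0:ℝ)
    have := hFU.comp_tendsto htend
    simp only [Function.comp_def, add_sub_cancel_left] at this
    rw [hD1, hU₀]
    exact this
  have hg : ∀ h : ℝ, HasDerivAt (fun h : ℝ => U (t₀ + h) - U₀ - h • D1 - (h^2/2) • D2)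
      ((A (U (t₀ + h)) + R (U (t₀ + h))) - D1 - h • D2) h := by
    intro h
    have h1 : HasDerivAt (fun h : ℝ => U (t₀ + h)) (A (U (t₀ + h)) + R (U (t₀ + h))) h := by
      have := (hU (t₀ + h)).scomp h ((hasDerivAt_id h).const_add t₀)
      simpa [Function.comp_def] using this
    have h2 : HasDerivAt (fun h : ℝ => h • D1) D1 h := by
      simpa using (hasDerivAt_id h).smul_const D1
    have h3 : HasDerivAt (fun h : ℝ => (h^2/2) • D2) (h • D2) h := by
      have := ((hasDerivAt_pow 2 h).div_const 2).smul_const D2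
      convert this using 2
      push_cast; ring
    exact ((h1.sub_const U₀).sub h2).sub h3
  have hA : (fun h : ℝ => U (t₀ + h) - U₀ - h • D1 - (h^2/2) • D2) =o[𝓝[>] (0:ℝ)]
      (fun h : ℝ => h ^ 2) := by
    apply little_o_sq_of_deriv hg _ hGo
    simp [← hU₀]
  -- Step B: expansion of the splitting scheme.
  set l : Filter ℝ := 𝓝[>] (0:ℝ) with hl
  set V' : ℝ → X := fun τ => U₀ + τ • A U₀ + (τ^2/2) • A (A U₀) with hV'
  set W : ℝ → X := fun τ => V' τ + (τ/2) • R (V' τ) with hW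
  have hVc : Continuous V' := by fun_prop
  have hWc : Continuous W := by fun_prop
  have hV0 : V' 0 = U₀ := by simp [hV']
  have hW0 : W 0 = U₀ := by simp [hW, hV0]
  have hWt : Tendsto W l (𝓝 U₀) := by
    rw [← hW0]
    exact (hWc.tendsto 0).mono_left nhdsWithin_le_nhds
  have hWO : (fun τ => W τ - U₀) =O[l] (fun τ => τ) := by
    set q : ℝ → X := fun τ => A U₀ + (τ/2) • A (A U₀) + (1/2 : ℝ) • R (V' τ) with hq
    have hqc : Continuous q := by fun_prop
    have hqO : q =O[l] (fun _ => (1:ℝ)) :=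
      ((hqc.tendsto 0).mono_left nhdsWithin_le_nhds).isBigO_one ℝ
    have := (isBigO_refl (fun τ : ℝ => τ) l).smul hqO
    refine (IsBigO.congr' this ?_ ?_)
    · filter_upwards with τ
      simp only [hq, hW, hV']
      module
    · filter_upwards with τ
      simp
  have hPo : (fun τ => R (W τ) - R U₀ - L (W τ - U₀)) =o[l] (fun τ => τ) := by
    have hrem := hRder.isLittleO.comp_tendsto hWt
    simp only [Function.comp_def] at hrem
    exact hrem.trans_isBigO hWO
  have term1 : (fun τ : ℝ => (τ^2/2) • A (A U₀)) =o[l] (fun τ => τ) := by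
    have h2 : (fun τ : ℝ => τ/2) =o[l] (fun _ => (1:ℝ)) := by
      rw [isLittleO_one_iff]
      have : Tendsto (fun τ : ℝ => τ/2) (𝓝 0) (𝓝 (0/2)) :=
        (continuous_id.div_const 2).tendsto 0
      simpa using this.mono_left nhdsWithin_le_nhds
    have ht := (isBigO_refl (fun τ : ℝ => τ) l).mul_isLittleO h2
    have ht2 : (fun τ : ℝ => τ^2/2) =o[l] (fun τ => τ) := by
      refine ht.congr' ?_ ?_
      · filter_upwards with τ; ring
      · filter_upwards with τ; simp
    have := ht2.smul_isBigO (isBigO_const_const (A (A U₀)) (one_ne_zero (α := ℝ)) l)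
    refine this.congr' (by filter_upwards with τ; rfl) ?_
    filter_upwards with τ; simp
  have term2 : (fun τ : ℝ => (τ/2) • (R (V' τ) - R U₀)) =o[l] (fun τ => τ) := by
    have hRt : (fun τ => R (V' τ) - R U₀) =o[l] (fun _ => (1:ℝ)) := by
      rw [isLittleO_one_iff]
      have : Tendsto (fun τ => R (V' τ) - R U₀) (𝓝 0) (𝓝 (R (V' 0) - R U₀)) :=
        ((hRc.comp hVc).sub continuous_const).tendsto 0
      rw [hV0, sub_self] at this
      exact this.mono_left nhdsWithin_le_nhds
    have hhalf : (fun τ : ℝ => τ/2) =O[l] (fun τ => τ) := by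
      have := (isBigO_refl (fun τ : ℝ => τ) l).const_mul_left (1/2)
      refine this.congr' ?_ (EventuallyEq.refl _ _)
      filter_upwards with τ; ring
    have := hhalf.smul_isLittleO hRt
    refine this.congr' (by filter_upwards with τ; rfl) ?_
    filter_upwards with τ; simp
  have hso : (fun τ : ℝ => (τ^2/2) • A (A U₀) + (τ/2) • (R (V' τ) - R U₀)) =o[l]
      (fun τ => τ) := term1.add term2
  have hLs : (fun τ : ℝ => L ((τ^2/2) • A (A U₀) + (τ/2) • (R (V' τ) - R U₀))) =o[l]
      (fun τ => τ) := (L.isBigO_comp _ l).trans_isLittleO hso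
  have smul_step : ∀ p : ℝ → X, p =o[l] (fun τ => τ) →
      (fun τ => τ • p τ) =o[l] (fun τ => τ^2) := by
    intro p hp
    have := (isBigO_refl (fun τ : ℝ => τ) l).smul_isLittleO hp
    refine this.congr' (EventuallyEq.refl _ _) ?_
    filter_upwards with τ
    simp [smul_eq_mul, sq]
  have hB : (fun τ => Utilde τ - U₀ - τ • D1 -
      (τ^2/2) • (D2 - (A (R U₀) - L (A U₀)))) =o[l] (fun τ => τ^2) := by
    have hsum := (smul_step _ hPo).add (smul_step _ hLs)
    refine hsum.congr' ?_ (EventuallyEq.refl _ _)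
    filter_upwards [self_mem_nhdsWithin] with τ (hτ : 0 < τ)
    have hVeq : V τ = V' τ := by
      rw [hV τ hτ, hV']
      simp only [map_add, map_smul]
      module
    rw [hUt τ hτ, hVeq, hD2, hD1]
    have hWeq : V' τ + (τ/2) • R (V' τ) = W τ := rfl
    rw [hWeq]
    simp only [map_add, map_sub, map_smul, hW, hV']
    module
  -- Assemble.
  have hfin := hA.sub hB
  refine hfin.congr' ?_ (EventuallyEq.refl _ _)
  filter_upwards with τ
  module
end

section
/- Let X be a real Banach space, A : X → X a bounded linear operator, and R : X → X a three times continuously differentiable map. Let U : ℝ → X be differentiable with U′(t) = A(U(t)) + R(U(t)) for all t, and let t₀ ∈ ℝ, U₀ := U(t₀). For τ > 0 define the sequential-splitting improved-Euler approximation starting with the nonlinear step: V(τ) := U₀ + τ·R(U₀ + (τ/2)·R(U₀)) and Ũ(τ) := V(τ) + τ·A(V(τ) + (τ/2)·A(V(τ))). Then, as τ → 0, U(t₀ + τ) − Ũ(τ) = (τ²/2)·(R′(U₀)(A(U₀)) − A(R(U₀))) + o(τ²); in particular, although the improved Euler scheme is of second order, sequential splitting combined with it yields only a first-order method. -/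
open Asymptotics Filter Topology

/-- Second-order Taylor expansion from the right, proved via the mean value inequality. -/
lemma taylor2_aux {X : Type*} [NormedAddCommGroup X] [NormedSpace ℝ X]
    {g g' : ℝ → X} {b : X}
    (hg : ∀ t : ℝ, HasDerivAt g (g' t) t)
    (hg' : HasDerivAt g' b 0) :
    (fun τ : ℝ => g τ - g 0 - τ • g' 0 - (τ ^ 2 / 2) • b) =o[𝓝[>] (0:ℝ)]
      fun τ : ℝ => τ ^ 2 := by
  have hφ : (fun s : ℝ => g' s - g' 0 - s • b) =o[𝓝 (0:ℝ)] fun s => s := by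
    simpa using hasDerivAt_iff_isLittleO.mp hg'
  rw [isLittleO_iff]
  intro ε hε
  rw [isLittleO_iff] at hφ
  obtain ⟨δ, hδ, hδ'⟩ := Metric.eventually_nhds_iff.mp (hφ hε)
  filter_upwards [Ioo_mem_nhdsGT_of_mem (Set.mem_Ico.mpr ⟨le_rfl, hδ⟩)] with τ hτ
  obtain ⟨hτ0, hτδ⟩ := hτ
  set h : ℝ → X := fun s => g s - s • g' 0 - (s ^ 2 / 2) • b with hhdef
  have hh : ∀ s ∈ Set.Icc (0:ℝ) τ,
      HasDerivWithinAt h (g' s - g' 0 - s • b) (Set.Icc (0:ℝ) τ) s := by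
    intro s hs
    have h1 : HasDerivAt (fun s : ℝ => s • g' 0) (g' 0) s := by
      simpa using (hasDerivAt_id s).smul_const (g' 0)
    have h2 : HasDerivAt (fun s : ℝ => (s ^ 2 / 2) • b) (s • b) s := by
      have h3 : HasDerivAt (fun s : ℝ => s ^ 2 / 2) s s := by
        have := (hasDerivAt_pow 2 s).div_const 2
        exact this.congr_deriv (by norm_num)
      exact h3.smul_const b
    exact (((hg s).sub h1).sub h2).hasDerivWithinAt
  have bound : ∀ s ∈ Set.Ico (0:ℝ) τ, ‖g' s - g' 0 - s • b‖ ≤ ε * τ := by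
    intro s hs
    have hsd : dist s 0 < δ := by
      rw [Real.dist_eq, sub_zero, abs_of_nonneg hs.1]
      exact lt_trans hs.2 hτδ
    have h1 : ‖g' s - g' 0 - s • b‖ ≤ ε * ‖s‖ := hδ' hsd
    have h2 : ‖s‖ ≤ τ := by
      rw [Real.norm_eq_abs, abs_of_nonneg hs.1]
      exact le_of_lt hs.2
    calc ‖g' s - g' 0 - s • b‖ ≤ ε * ‖s‖ := h1
      _ ≤ ε * τ := by nlinarith
  have hmvt := norm_image_sub_le_of_norm_deriv_le_segment' hh bound τ
    (Set.mem_Icc.mpr ⟨le_of_lt hτ0, le_rfl⟩)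
  have h0 : h 0 = g 0 := by simp [hhdef]
  have heq : h τ - h 0 = g τ - g 0 - τ • g' 0 - (τ ^ 2 / 2) • b := by
    rw [h0]; simp only [hhdef]; abel
  rw [heq] at hmvt
  calc ‖g τ - g 0 - τ • g' 0 - (τ ^ 2 / 2) • b‖ ≤ ε * τ * (τ - 0) := hmvt
    _ = ε * ‖τ ^ 2‖ := by
        rw [Real.norm_eq_abs, abs_of_nonneg (by positivity : (0:ℝ) ≤ τ ^ 2)]
        ring

/-- Sequential splitting (nonlinear step first) combined with the second-order improved
Euler (explicit midpoint) scheme: with `V(τ) = U₀ + τR(U₀ + (τ/2)R(U₀))` and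
`Ũ(τ) = V(τ) + τA(V(τ) + (τ/2)A(V(τ)))`, the local error satisfies, as `τ → 0⁺`,
`U(t₀+τ) − Ũ(τ) = (τ²/2)(R′(U₀)(A(U₀)) − A(R(U₀))) + o(τ²)`; in particular, although the
improved Euler scheme is of second order, sequential splitting combined with it yields
only a first-order method. -/
theorem seq_splitting_improved_euler_nonlinear_first
    {X : Type*} [NormedAddCommGroup X] [NormedSpace ℝ X] [CompleteSpace X]
    (A : X →L[ℝ] X) (R : X → X) (hR : ContDiff ℝ 3 R)
    (U : ℝ → X) (hU : ∀ t : ℝ, HasDerivAt U (A (U t) + R (U t)) t)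
    (t₀ : ℝ) (U₀ : X) (hU₀ : U₀ = U t₀)
    (V Utilde : ℝ → X)
    (hV : ∀ τ : ℝ, 0 < τ → V τ = U₀ + τ • R (U₀ + (τ / 2) • R U₀))
    (hUt : ∀ τ : ℝ, 0 < τ →
      Utilde τ = V τ + τ • A (V τ + (τ / 2) • A (V τ))) :
    (fun τ : ℝ =>
        U (t₀ + τ) - Utilde τ -
          (τ ^ 2 / 2) • (fderiv ℝ R U₀ (A U₀) - A (R U₀)))
      =o[𝓝[>] 0] fun τ : ℝ => τ ^ 2 := by
  have hRdiff : Differentiable ℝ R := hR.differentiable (by norm_num)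
  set R' : X →L[ℝ] X := fderiv ℝ R U₀ with hR'
  -- the solution flow shifted to start at 0
  set g : ℝ → X := fun τ => U (t₀ + τ) with hgdef
  set g' : ℝ → X := fun τ => A (U (t₀ + τ)) + R (U (t₀ + τ)) with hg'def
  have hg : ∀ τ : ℝ, HasDerivAt g (g' τ) τ := by
    intro τ
    have hshift : HasDerivAt (fun τ : ℝ => t₀ + τ) 1 τ := by
      simpa using (hasDerivAt_id τ).const_add t₀
    have := (hU (t₀ + τ)).scomp τ hshift
    simpa [hgdef, hg'def, Function.comp_def] using this
  set D : X := A U₀ + R U₀ with hD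
  have hg0 : g 0 = U₀ := by simp [hgdef, hU₀]
  have hg'0 : g' 0 = D := by simp [hg'def, hD, hU₀]
  set b : X := A D + R' D with hb
  have hgg' : HasDerivAt g' b 0 := by
    have h1 : HasDerivAt (fun τ : ℝ => A (g τ)) (A D) 0 := by
      have := A.hasFDerivAt.comp_hasDerivAt 0 (hg 0)
      simpa [hg'0, Function.comp_def] using this
    have h2 : HasDerivAt (fun τ : ℝ => R (g τ)) (R' D) 0 := by
      have := ((hRdiff (g 0)).hasFDerivAt).comp_hasDerivAt 0 (hg 0)
      simpa [hg0, hg'0, hR', Function.comp_def] using this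
    have := h1.add h2
    simpa [hg'def, hgdef, hb, Pi.add_def] using this
  have key1 : (fun τ : ℝ => g τ - g 0 - τ • g' 0 - (τ ^ 2 / 2) • b)
      =o[𝓝[>] (0:ℝ)] fun τ => τ ^ 2 := taylor2_aux hg hgg'
  -- the splitting approximation
  set r : ℝ → X := fun τ => R (U₀ + (τ / 2) • R U₀) with hrdef
  set q : X := (2⁻¹ : ℝ) • R' (R U₀) with hq
  have hr0 : r 0 = R U₀ := by simp [hrdef]
  have hrdv : HasDerivAt r q 0 := by
    have hin : HasDerivAt (fun τ : ℝ => U₀ + (τ / 2) • R U₀) ((2⁻¹ : ℝ) • R U₀) 0 := by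
      have h1 : HasDerivAt (fun τ : ℝ => τ / 2) (2⁻¹ : ℝ) 0 := by
        simpa using (hasDerivAt_id (0:ℝ)).div_const 2
      simpa using (h1.smul_const (R U₀)).const_add U₀
    have := ((hRdiff (U₀ + ((0:ℝ) / 2) • R U₀)).hasFDerivAt).comp_hasDerivAt 0 hin
    simpa [hrdef, hq, hR', Function.comp_def] using this
  have hrcont : ContinuousAt r 0 := hrdv.continuousAt
  have he₁ : (fun τ : ℝ => r τ - R U₀ - τ • q) =o[𝓝 (0:ℝ)] fun τ => τ := by
    have := hasDerivAt_iff_isLittleO.mp hrdv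
    simpa [hr0] using this
  have o1 : (fun τ : ℝ => τ • (r τ - R U₀ - τ • q)) =o[𝓝 (0:ℝ)] fun τ => τ ^ 2 := by
    have := (isBigO_refl (fun τ : ℝ => τ) (𝓝 (0:ℝ))).smul_isLittleO he₁
    simpa only [smul_eq_mul, ← pow_two] using this
  have o2 : (fun τ : ℝ => τ ^ 2 • A (r τ - R U₀)) =o[𝓝 (0:ℝ)] fun τ => τ ^ 2 := by
    have ht0 : Filter.Tendsto (fun τ : ℝ => A (r τ - R U₀)) (𝓝 0) (𝓝 0) := by
      have h1 : Filter.Tendsto (fun τ : ℝ => r τ - R U₀) (𝓝 0) (𝓝 0) := by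
        have := hrcont.tendsto.sub (tendsto_const_nhds (x := R U₀))
        simpa [hr0] using this
      have := (A.continuous.tendsto' 0 0 (map_zero A)).comp h1
      simpa only [Function.comp_def] using this
    have hlo : (fun τ : ℝ => A (r τ - R U₀)) =o[𝓝 (0:ℝ)] (fun _ => (1:ℝ)) :=
      (isLittleO_one_iff ℝ).mpr ht0
    have := (isBigO_refl (fun τ : ℝ => τ ^ 2) (𝓝 (0:ℝ))).smul_isLittleO hlo
    simpa using this
  have o3 : (fun τ : ℝ => (τ ^ 3 / 2) • A (A (r τ))) =o[𝓝 (0:ℝ)] fun τ => τ ^ 2 := by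
    have hbig : (fun τ : ℝ => A (A (r τ))) =O[𝓝 (0:ℝ)] (fun _ => (1:ℝ)) := by
      have : Filter.Tendsto (fun τ : ℝ => A (A (r τ))) (𝓝 0) (𝓝 (A (A (R U₀)))) := by
        have := ((A.continuous.comp A.continuous).tendsto (R U₀)).comp
          (by simpa [hr0] using hrcont.tendsto)
        simpa [Function.comp_def] using this
      exact this.isBigO_one ℝ
    have hsm : (fun τ : ℝ => τ ^ 3 / 2) =o[𝓝 (0:ℝ)] fun τ => τ ^ 2 := by
      have h1 : (fun τ : ℝ => τ ^ 3) =o[𝓝 (0:ℝ)] fun τ => τ ^ 2 :=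
        isLittleO_pow_pow (by norm_num)
      have := h1.const_mul_left (2⁻¹ : ℝ)
      simpa [div_eq_inv_mul] using this
    have := hsm.smul_isBigO hbig
    simpa using this
  set c₂ : X := R' (R U₀) + (A (R U₀) + A (R U₀)) + A (A U₀) with hc₂
  set W : ℝ → X := fun τ =>
    (U₀ + τ • r τ) + τ • A ((U₀ + τ • r τ) + (τ / 2) • A (U₀ + τ • r τ)) with hWdef
  have key2 : (fun τ : ℝ => W τ - U₀ - τ • D - (τ ^ 2 / 2) • c₂)
      =o[𝓝 (0:ℝ)] fun τ => τ ^ 2 := by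
    refine ((o1.add o2).add o3).congr' (Filter.Eventually.of_forall fun τ => ?_)
      (Filter.EventuallyEq.refl _ _)
    simp only [hWdef, hrdef, hc₂, hD, hq, map_add, map_smul, map_sub, smul_sub, smul_add,
      smul_smul]
    module
  have key2' := key2.mono (nhdsWithin_le_nhds (s := Set.Ioi (0:ℝ)))
  refine (key1.sub key2').congr' ?_ (Filter.EventuallyEq.refl _ _)
  filter_upwards [self_mem_nhdsWithin] with τ hτ
  rw [hUt τ hτ, hV τ hτ]
  simp only [hgdef, hg'def, hg0, hg'0, hWdef, hrdef, hb, hD, hc₂, hq, hU₀, hR', add_zero,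
    map_add, map_smul, map_sub, smul_sub, smul_add, smul_smul]
  module
end

section
/- Let X be a real Banach space and let A, B be bounded linear operators on X. If exp(τA) ∘ exp(τB) = exp(τ(A+B)) for every τ ∈ ℝ, then also exp((τ/2)A) ∘ exp(τB) ∘ exp((τ/2)A) = exp(τ(A+B)) for every τ ∈ ℝ; that is, if the sequential splitting of the semigroups generated by A and B is exact, then the Marchuk–Strang splitting is exact as well. -/
open NormedSpace

set_option synthInstance.maxHeartbeats 1000000 in
private lemma exp_smul_mul_exp_smul {X : Type*} [NormedAddCommGroup X] [NormedSpace ℝ X]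
    [CompleteSpace X] (C : X →L[ℝ] X) (s t : ℝ) :
    exp (s • C) * exp (t • C) = exp ((s + t) • C) := by
  letI : NormedAlgebra ℚ (X →L[ℝ] X) := NormedAlgebra.restrictScalars ℚ ℝ _
  rw [add_smul, exp_add_of_commute]
  exact ((Commute.refl C).smul_left s).smul_right t

/-- If the sequential splitting of the operator semigroups generated by bounded linear
operators `A` and `B` on a real Banach space is exact, i.e.
`exp(τA) ∘ exp(τB) = exp(τ(A+B))` for every `τ ∈ ℝ`, then the Marchuk–Strang splitting is
exact as well: `exp((τ/2)A) ∘ exp(τB) ∘ exp((τ/2)A) = exp(τ(A+B))` for every `τ ∈ ℝ`. -/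
theorem strang_splitting_exact_of_seq_exact
    {X : Type*} [NormedAddCommGroup X] [NormedSpace ℝ X] [CompleteSpace X]
    (A B : X →L[ℝ] X)
    (h : ∀ τ : ℝ,
      NormedSpace.exp (τ • A) ∘L NormedSpace.exp (τ • B) =
        NormedSpace.exp (τ • (A + B))) :
    ∀ τ : ℝ,
      NormedSpace.exp ((τ / 2) • A) ∘L NormedSpace.exp (τ • B) ∘L
          NormedSpace.exp ((τ / 2) • A) =
        NormedSpace.exp (τ • (A + B)) := by
  have h' : ∀ τ : ℝ, exp (τ • A) * exp (τ • B) = exp (τ • (A + B)) := h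
  have hinv : ∀ (C : X →L[ℝ] X) (τ : ℝ), exp (τ • C) * exp ((-τ) • C) = 1 := by
    intro C τ
    rw [exp_smul_mul_exp_smul, add_neg_cancel, zero_smul, exp_zero]
  have comm : ∀ τ : ℝ, exp (τ • B) * exp (τ • A) = exp (τ • (A + B)) := by
    intro τ
    have key : exp ((-τ) • A) * (exp ((-τ) • B) * exp (τ • (A + B))) = 1 := by
      rw [← mul_assoc, h' (-τ), exp_smul_mul_exp_smul, neg_add_cancel, zero_smul, exp_zero]
    calc exp (τ • B) * exp (τ • A)
        = exp (τ • B) * (exp (τ • A) *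
            (exp ((-τ) • A) * (exp ((-τ) • B) * exp (τ • (A + B))))) := by
          rw [key, mul_one]
      _ = exp (τ • B) * (exp ((-τ) • B) * exp (τ • (A + B))) := by
          rw [← mul_assoc (exp (τ • A)), hinv A τ, one_mul]
      _ = exp (τ • (A + B)) := by rw [← mul_assoc, hinv B τ, one_mul]
  intro τ
  have hτB : exp (τ • B) = exp ((τ/2) • B) * exp ((τ/2) • B) := by
    rw [exp_smul_mul_exp_smul]; norm_num
  have hτS : exp (τ • (A + B)) = exp ((τ/2) • (A + B)) * exp ((τ/2) • (A + B)) := by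
    rw [exp_smul_mul_exp_smul]; norm_num
  show exp ((τ/2) • A) * (exp (τ • B) * exp ((τ/2) • A)) = exp (τ • (A + B))
  rw [hτB, hτS]
  simp only [mul_assoc]
  rw [comm (τ/2), ← mul_assoc, h' (τ/2)]
end
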